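/- Let L be a positive integer, let d ∈ ℍ and x ∈ ℍ^L be fixed, and let f : ℍ^L → ℍ be the function f(w) = (Σ_{l} w_l·x_l)·d*. Then for every index m and every point w ∈ ℍ^L, the m-th HR*-partial derivative of f at w equals −(1/2)·d·x_m*; that is, ∂(wᵀx·d*)/∂w_m* = −(1/2)·d·x_m*. -/

import Mathlib

open Quaternion

/-- The imaginary unit `i` of the real quaternions. -/
def qI : ℍ[ℝ] := ⟨0, 1, 0, 0⟩

/-- The imaginary unit `j` of the real quaternions. -/
def qJ : ℍ[ℝ] := ⟨0, 0, 1, 0⟩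

/-- The imaginary unit `k` of the real quaternions. -/
def qK : ℍ[ℝ] := ⟨0, 0, 0, 1⟩

/-- The `m`-th HR*-partial derivative of `f : ℍ^L → ℍ` at `w`:
`(1/4) (D_{1,m} f(w) + (D_{i,m} f(w))·i + (D_{j,m} f(w))·j + (D_{k,m} f(w))·k)`,
where `D_{v,m} f(w)` is the real Fréchet derivative of `f` at `w` in direction `v·e_m`. -/
noncomputable def HRStarPartial {L : ℕ} (f : (Fin L → ℍ[ℝ]) → ℍ[ℝ]) (m : Fin L)
    (w : Fin L → ℍ[ℝ]) : ℍ[ℝ] :=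
  (4 : ℍ[ℝ])⁻¹ * (fderiv ℝ f w (Pi.single m 1) + fderiv ℝ f w (Pi.single m qI) * qI
    + fderiv ℝ f w (Pi.single m qJ) * qJ + fderiv ℝ f w (Pi.single m qK) * qK)

/-- The continuous linear map `v ↦ (∑ l, v l * x l) * star d`. -/
noncomputable def Fmap {L : ℕ} (d : ℍ[ℝ]) (x : Fin L → ℍ[ℝ]) :
    (Fin L → ℍ[ℝ]) →L[ℝ] ℍ[ℝ] :=
  ∑ l, (LinearMap.mulRight ℝ (x l * star d)).toContinuousLinearMap.comp
    (ContinuousLinearMap.proj l)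

lemma Fmap_apply {L : ℕ} (d : ℍ[ℝ]) (x : Fin L → ℍ[ℝ]) (v : Fin L → ℍ[ℝ]) :
    Fmap d x v = (∑ l, v l * x l) * star d := by
  simp [Fmap, Finset.sum_mul, mul_assoc]

lemma Fmap_single {L : ℕ} (d : ℍ[ℝ]) (x : Fin L → ℍ[ℝ]) (m : Fin L) (q : ℍ[ℝ]) :
    Fmap d x (Pi.single m q) = q * (x m * star d) := by
  rw [Fmap_apply, Finset.sum_eq_single m]
  · rw [mul_assoc]; simp
  · intro b _ hb; simp [Pi.single_eq_of_ne hb]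
  · intro h; simp at h

lemma fderiv_f {L : ℕ} (d : ℍ[ℝ]) (x : Fin L → ℍ[ℝ]) (w : Fin L → ℍ[ℝ]) :
    fderiv ℝ (fun v => (∑ l, v l * x l) * star d) w = Fmap d x := by
  have : (fun v : Fin L → ℍ[ℝ] => (∑ l, v l * x l) * star d) = Fmap d x := by
    funext v; rw [Fmap_apply]
  rw [this, ContinuousLinearMap.fderiv]

lemma quat_identity (a : ℍ[ℝ]) :
    (4 : ℍ[ℝ])⁻¹ * (a + qI * a * qI + qJ * a * qJ + qK * a * qK)
      = -(2 : ℍ[ℝ])⁻¹ * star a := by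
  have key : a + qI * a * qI + qJ * a * qJ + qK * a * qK
      = (((-2 : ℝ)) : ℍ[ℝ]) * star a := by
    ext <;> simp [Quaternion.re_mul, Quaternion.imI_mul, Quaternion.imJ_mul, Quaternion.imK_mul] <;> simp [qI, qJ, qK] <;> ring
  have hc : (((-2 : ℝ)) : ℍ[ℝ]) = -2 := by norm_cast
  have h2' : ((2 : ℝ) : ℍ[ℝ]) = 2 := by norm_cast
  have h2 : (2 : ℍ[ℝ]) ≠ 0 := by
    rw [← h2', show (0 : ℍ[ℝ]) = ((0 : ℝ) : ℍ[ℝ]) by norm_cast, Ne, Quaternion.coe_inj]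
    norm_num
  have hinv : (4 : ℍ[ℝ])⁻¹ * (-2) = -(2 : ℍ[ℝ])⁻¹ := by
    have h4 : (4 : ℍ[ℝ]) = 2 * 2 := by norm_num
    rw [h4, mul_inv_rev, mul_neg, mul_assoc, inv_mul_cancel₀ h2, mul_one]
  rw [key, hc, ← mul_assoc, hinv]

/-- ∂(wᵀx·d*)/∂w_m* = −(1/2)·d·x_m*. -/
theorem hr_star_partial_wTx_dstar (L : ℕ) (hL : 0 < L) (d : ℍ[ℝ]) (x : Fin L → ℍ[ℝ])
    (m : Fin L) (w : Fin L → ℍ[ℝ]) :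
    HRStarPartial (fun v => (∑ l, v l * x l) * star d) m w
      = -(2 : ℍ[ℝ])⁻¹ * (d * star (x m)) := by
  unfold HRStarPartial
  rw [fderiv_f, Fmap_single, Fmap_single, Fmap_single, Fmap_single, one_mul]
  have := quat_identity (x m * star d)
  rw [show ∀ a : ℍ[ℝ], a + qI * a * qI + qJ * a * qJ + qK * a * qK =
    a + qI * a * qI + qJ * a * qJ + qK * a * qK from fun _ => rfl] at this
  calc (4 : ℍ[ℝ])⁻¹ * (x m * star d + qI * (x m * star d) * qI
        + qJ * (x m * star d) * qJ + qK * (x m * star d) * qK)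
      = -(2 : ℍ[ℝ])⁻¹ * star (x m * star d) := quat_identity _
    _ = -(2 : ℍ[ℝ])⁻¹ * (d * star (x m)) := by rw [star_mul, star_star]
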